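/- In the ring of formal power series in the two variables x and y with coefficients in ℤ[q], the identity Σ_{m=0}^{∞} y^m (x;q)_m = Σ_{ℓ=0}^{∞} (−xy)^ℓ q^{ℓ(ℓ−1)/2} · (y;q)_{ℓ+1}^{−1} holds, where each factor (y;q)_{ℓ+1} = (1−y)(1−qy)⋯(1−q^ℓ y) is invertible as a formal power series (its constant term is 1). -/

import Mathlib

/-- The variable `x` of `ℤ[q][[x,y]]`. -/
noncomputable def Xv : MvPowerSeries (Fin 2) (Polynomial ℤ) := MvPowerSeries.X 0

/-- The variable `y` of `ℤ[q][[x,y]]`. -/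
noncomputable def Yv : MvPowerSeries (Fin 2) (Polynomial ℤ) := MvPowerSeries.X 1

/-- The parameter `q`, viewed as a constant of `ℤ[q][[x,y]]`. -/
noncomputable def qc : MvPowerSeries (Fin 2) (Polynomial ℤ) :=
  MvPowerSeries.C (σ := Fin 2) (R := Polynomial ℤ) Polynomial.X

/-- The sum `∑_{m=0}^∞ f m` of a family of two-variable power series whose `m`-th member
lies in the `m`-th power of the ideal `(x, y)`: its coefficient on the monomial `x^{d 0} y^{d 1}`
is the (finite) sum of the corresponding coefficients of `f 0, …, f (d 0 + d 1)`. -/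
noncomputable def seriesSum (f : ℕ → MvPowerSeries (Fin 2) (Polynomial ℤ)) :
    MvPowerSeries (Fin 2) (Polynomial ℤ) :=
  fun d => MvPowerSeries.coeff (R := Polynomial ℤ) d (∑ m ∈ Finset.range (d 0 + d 1 + 1), f m)

open Finset

local notation "R" => Polynomial ℤ

/-- coefficients of `(x;q)_m`: `Pc a m` is the coefficient of `x^a`. -/
noncomputable def Pc : ℕ → ℕ → R
  | 0, 0 => 1
  | _+1, 0 => 0
  | 0, m+1 => Pc 0 m
  | a+1, m+1 => Pc (a+1) m - Polynomial.X ^ m * Pc a m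

/-- `(y;q)_n` as a power series. -/
noncomputable def Piq (n : ℕ) : PowerSeries R :=
  ∏ i ∈ Finset.range n, (1 - PowerSeries.C (Polynomial.X ^ i) * PowerSeries.X)

/-- coefficients of the inverse of `(y;q)_{ℓ+1}`. -/
noncomputable def gc (ℓ j : ℕ) : R :=
  PowerSeries.coeff j (Ring.inverse (Piq (ℓ+1)))

lemma ring_inverse_eq {A : Type*} [CommRing A] {a b : A} (h : a * b = 1) :
    Ring.inverse a = b := by
  have ha : IsUnit a := IsUnit.of_mul_eq_one _ h
  calc Ring.inverse a = Ring.inverse a * (a * b) := by rw [h, mul_one]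
    _ = b := by rw [← mul_assoc, Ring.inverse_mul_cancel _ ha, one_mul]

lemma constantCoeff_Piq (n : ℕ) : PowerSeries.constantCoeff (Piq n) = 1 := by
  rw [Piq, map_prod]
  simp

lemma isUnit_Piq (n : ℕ) : IsUnit (Piq n) := by
  rw [PowerSeries.isUnit_iff_constantCoeff, constantCoeff_Piq]
  exact isUnit_one

lemma inv_Piq_mul (n : ℕ) : Ring.inverse (Piq n) * Piq n = 1 :=
  Ring.inverse_mul_cancel _ (isUnit_Piq n)

lemma Istep (ℓ : ℕ) :
    Ring.inverse (Piq (ℓ+1)) =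
      (1 - PowerSeries.C (Polynomial.X ^ (ℓ+1)) * PowerSeries.X) *
        Ring.inverse (Piq (ℓ+2)) := by
  have hu : IsUnit (Piq (ℓ+1)) := isUnit_Piq (ℓ+1)
  apply hu.mul_left_cancel
  have h2 : Piq (ℓ+2) = Piq (ℓ+1) * (1 - PowerSeries.C (Polynomial.X ^ (ℓ+1)) * PowerSeries.X) := by
    rw [Piq, Finset.prod_range_succ]; rfl
  have e1 : Piq (ℓ+1) * Ring.inverse (Piq (ℓ+1)) = 1 := by
    rw [mul_comm]; exact inv_Piq_mul _
  have e2 : Piq (ℓ+1) * ((1 - PowerSeries.C (Polynomial.X ^ (ℓ+1)) * PowerSeries.X) *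
      Ring.inverse (Piq (ℓ+2))) = 1 := by
    rw [← mul_assoc, ← h2, mul_comm]; exact inv_Piq_mul _
  rw [e1, e2]

lemma gc_rec (ℓ j : ℕ) :
    gc ℓ (j+1) = gc (ℓ+1) (j+1) - Polynomial.X ^ (ℓ+1) * gc (ℓ+1) j := by
  unfold gc
  rw [Istep ℓ, sub_mul, one_mul, map_sub, mul_assoc]
  congr 1
  rw [PowerSeries.coeff_C_mul, PowerSeries.coeff_succ_X_mul]

lemma gc_zero_right (ℓ : ℕ) : gc ℓ 0 = 1 := by
  have := congrArg (PowerSeries.constantCoeff) (inv_Piq_mul (ℓ+1))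
  rw [map_mul, constantCoeff_Piq, mul_one, map_one] at this
  simpa [gc, PowerSeries.coeff_zero_eq_constantCoeff] using this

lemma gc_zero_left (j : ℕ) : gc 0 j = 1 := by
  have h1 : Piq 1 = 1 - PowerSeries.X := by
    rw [Piq, Finset.prod_range_one, pow_zero, map_one, one_mul]
  have h2 : (1 - PowerSeries.X : PowerSeries R) * PowerSeries.mk (fun _ => 1) = 1 := by
    ext n
    rw [sub_mul, one_mul, map_sub]
    cases n with
    | zero => simp
    | succ n => simp [PowerSeries.coeff_succ_X_mul]
  rw [gc, h1, ring_inverse_eq h2]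
  simp

lemma X_sub_one_ne : (Polynomial.X - 1 : R) ≠ 0 := by
  have := Polynomial.X_sub_C_ne_zero (1 : ℤ)
  simpa using this

lemma G1 : ∀ a : ℕ, (Polynomial.X - 1) * gc a 1 = Polynomial.X ^ (a+1) - 1 := by
  intro a
  induction a with
  | zero => rw [gc_zero_left]; ring
  | succ a ih =>
    have h : gc (a+1) 1 = gc a 1 + Polynomial.X ^ (a+1) * gc (a+1) 0 := by
      linear_combination -gc_rec a 0
    rw [gc_zero_right, mul_one] at h
    linear_combination (Polynomial.X - 1) * h + ih

lemma G2 : ∀ j : ℕ, (Polynomial.X - 1) * gc 1 j = Polynomial.X ^ (j+1) - 1 := by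
  intro j
  induction j with
  | zero => rw [gc_zero_right]; ring
  | succ j ih =>
    have h : gc 1 (j+1) = gc 0 (j+1) + Polynomial.X ^ 1 * gc 1 j := by
      linear_combination -gc_rec 0 j
    rw [gc_zero_left] at h
    linear_combination (Polynomial.X - 1) * h + Polynomial.X * ih

lemma Dlem : ∀ a j : ℕ, gc (a+1) (j+1) = gc (a+1) j + Polynomial.X ^ (j+1) * gc a (j+1) := by
  intro a
  induction a with
  | zero =>
    intro j
    apply mul_left_cancel₀ X_sub_one_ne
    rw [gc_zero_left]
    linear_combination G2 (j+1) - G2 j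
  | succ a iha =>
    intro j
    induction j with
    | zero =>
      apply mul_left_cancel₀ X_sub_one_ne
      rw [gc_zero_right]
      linear_combination G1 (a+2) - Polynomial.X * G1 (a+1)
    | succ j ihj =>
      have h1 := gc_rec (a+1) (j+1)
      have h2 := gc_rec (a+1) j
      have h3 := iha (j+1)
      have h4 := ihj
      have h5 := gc_rec a (j+1)
      linear_combination -h1 + h2 + h3 + Polynomial.X^(a+2) * h4 + Polynomial.X^(j+2) * h5

lemma Pc_zero_zero : Pc 0 0 = 1 := rfl
lemma Pc_succ_zero (a : ℕ) : Pc (a+1) 0 = 0 := rfl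
lemma Pc_zero_succ (m : ℕ) : Pc 0 (m+1) = Pc 0 m := rfl
lemma Pc_succ_succ (a m : ℕ) :
    Pc (a+1) (m+1) = Pc (a+1) m - Polynomial.X ^ m * Pc a m := rfl

lemma tri (a : ℕ) : (a+1)*a/2 = a*(a-1)/2 + a := by
  cases a with
  | zero => rfl
  | succ n =>
    have h : (n+2)*(n+1) = (n+1)*n + 2*(n+1) := by ring
    rw [h, Nat.add_mul_div_left _ _ (by norm_num : (0:ℕ) < 2)]
    simp

lemma key : ∀ b a : ℕ,
    Pc a b = if a ≤ b then (-1)^a * Polynomial.X^(a*(a-1)/2) * gc a (b-a) else 0 := by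
  intro b
  induction b with
  | zero =>
    intro a
    cases a with
    | zero => simp [Pc_zero_zero, gc_zero_right]
    | succ a => simp [Pc_succ_zero]
  | succ b ihb =>
    intro a
    cases a with
    | zero =>
      simp only [Pc_zero_succ, ihb 0, Nat.zero_le, if_true, pow_zero, one_mul,
        Nat.sub_zero, gc_zero_left]
    | succ a =>
      rw [Pc_succ_succ, ihb (a+1), ihb a]
      rcases lt_trichotomy a b with hab | hab | hab
      · -- a < b, so a+1 ≤ b
        obtain ⟨k, rfl⟩ := Nat.exists_eq_add_of_le (Nat.succ_le_of_lt hab)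
        have c1 : a + 1 ≤ a + 1 + k := by omega
        have c2 : a ≤ a + 1 + k := by omega
        have c3 : a + 1 ≤ a + 1 + k + 1 := by omega
        rw [if_pos c1, if_pos c2, if_pos c3]
        have e1 : a + 1 + k - (a+1) = k := by omega
        have e2 : a + 1 + k - a = k + 1 := by omega
        have e3 : a + 1 + k + 1 - (a+1) = k + 1 := by omega
        rw [e1, e2, e3]
        have e4 : (a+1) * (a+1-1) / 2 = a*(a-1)/2 + a := by
          simpa using tri a
        rw [e4, pow_add]
        simp only [Nat.succ_eq_add_one]
        linear_combination (-(1:R))^a * Polynomial.X^(a*(a-1)/2) * Polynomial.X^a *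
          Dlem a k
      · -- a = b
        subst hab
        have c1 : ¬ (a + 1 ≤ a) := by omega
        rw [if_neg c1, if_pos (le_refl a), if_pos (le_refl (a+1))]
        have e4 : (a+1) * (a+1-1) / 2 = a*(a-1)/2 + a := by
          simpa using tri a
        rw [e4, pow_add, Nat.sub_self, Nat.sub_self, gc_zero_right, gc_zero_right]
        ring
      · -- a > b
        rw [if_neg (by omega : ¬ (a+1 ≤ b)), if_neg (by omega : ¬ (a ≤ b)),
          if_neg (by omega : ¬ (a+1 ≤ b+1))]
        ring

lemma coeff_Piq_x : ∀ m a : ℕ,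
    PowerSeries.coeff a (Piq m) = Pc a m := by
  intro m
  induction m with
  | zero =>
    intro a
    rw [Piq, Finset.prod_range_zero]
    cases a with
    | zero => simp [Pc_zero_zero]
    | succ a => simp [Pc_succ_zero, PowerSeries.coeff_one]
  | succ m ih =>
    intro a
    have hsplit : Piq (m+1) = Piq m - (Piq m * PowerSeries.C (Polynomial.X ^ m)) *
        PowerSeries.X := by
      rw [Piq, Finset.prod_range_succ, ← Piq]
      ring
    rw [hsplit, map_sub]
    cases a with
    | zero =>
      simp only [PowerSeries.coeff_zero_eq_constantCoeff, map_mul,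
        PowerSeries.constantCoeff_X, mul_zero, sub_zero]
      rw [← PowerSeries.coeff_zero_eq_constantCoeff, ih 0, Pc_zero_succ]
    | succ a =>
      rw [PowerSeries.coeff_succ_mul_X, PowerSeries.coeff_mul_C, ih (a+1), ih a,
        Pc_succ_succ, mul_comm]

lemma fin2_eq_iff {i j : Fin 2} (hcov : ∀ k : Fin 2, k = i ∨ k = j)
    (d e : Fin 2 →₀ ℕ) : d = e ↔ d i = e i ∧ d j = e j := by
  constructor
  · rintro rfl; exact ⟨rfl, rfl⟩
  · rintro ⟨h1, h2⟩
    ext k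
    rcases hcov k with rfl | rfl
    · exact h1
    · exact h2

/-- Embedding of one-variable power series into two-variable ones, variable `X ↦ X i`. -/
noncomputable def embFun (i j : Fin 2) (f : PowerSeries R) : MvPowerSeries (Fin 2) R :=
  fun d => if d j = 0 then PowerSeries.coeff (d i) f else 0

lemma coeff_embFun (i j : Fin 2) (f : PowerSeries R) (d : Fin 2 →₀ ℕ) :
    MvPowerSeries.coeff d (embFun i j f) =
      if d j = 0 then PowerSeries.coeff (d i) f else 0 := rfl

section emb

variable {i j : Fin 2}

lemma embFun_one (hcov : ∀ k : Fin 2, k = i ∨ k = j) :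
    embFun i j (1 : PowerSeries R) = 1 := by
  apply MvPowerSeries.ext
  intro d
  rw [coeff_embFun, MvPowerSeries.coeff_one]
  simp only [PowerSeries.coeff_one]
  have h0 : d = 0 ↔ d i = 0 ∧ d j = 0 := by
    have := fin2_eq_iff hcov d 0
    simpa using this
  split_ifs with h1 h2 h3 h3 <;> simp_all

lemma embFun_mul (hij : i ≠ j) (hcov : ∀ k : Fin 2, k = i ∨ k = j) (f g : PowerSeries R) :
    embFun i j (f * g) = embFun i j f * embFun i j g := by
  apply MvPowerSeries.ext
  intro d
  rw [coeff_embFun, MvPowerSeries.coeff_mul]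
  simp only [coeff_embFun]
  by_cases hd : d j = 0
  · rw [if_pos hd, PowerSeries.coeff_mul]
    apply Finset.sum_nbij' (fun p => ((Finsupp.single i p.1, Finsupp.single i p.2) :
        (Fin 2 →₀ ℕ) × (Fin 2 →₀ ℕ)))
      (fun p => ((p.1 i, p.2 i) : ℕ × ℕ))
    · intro p hp
      rw [Finset.HasAntidiagonal.mem_antidiagonal] at hp
      rw [Finset.HasAntidiagonal.mem_antidiagonal, ← Finsupp.single_add, hp]
      symm
      rw [fin2_eq_iff hcov]
      refine ⟨by rw [Finsupp.single_eq_same], by rw [Finsupp.single_eq_of_ne hij.symm, hd]⟩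
    · intro p hp
      rw [Finset.HasAntidiagonal.mem_antidiagonal] at hp
      rw [Finset.HasAntidiagonal.mem_antidiagonal]
      have := congrArg (fun e : Fin 2 →₀ ℕ => e i) hp
      simpa [Finsupp.add_apply] using this
    · intro p hp
      simp [Finsupp.single_eq_same]
    · intro p hp
      rw [Finset.HasAntidiagonal.mem_antidiagonal] at hp
      have hj0 : p.1 j + p.2 j = 0 := by
        have := congrArg (fun e : Fin 2 →₀ ℕ => e j) hp
        simpa [Finsupp.add_apply, hd] using this
      have h1 : p.1 j = 0 := by omega
      have h2 : p.2 j = 0 := by omega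
      have e1 : Finsupp.single i (p.1 i) = p.1 := by
        rw [fin2_eq_iff hcov]
        refine ⟨Finsupp.single_eq_same, by rw [Finsupp.single_eq_of_ne hij.symm, h1]⟩
      have e2 : Finsupp.single i (p.2 i) = p.2 := by
        rw [fin2_eq_iff hcov]
        refine ⟨Finsupp.single_eq_same, by rw [Finsupp.single_eq_of_ne hij.symm, h2]⟩
      rw [Prod.ext_iff]
      exact ⟨e1, e2⟩
    · intro p hp
      simp [Finsupp.single_eq_of_ne hij.symm, Finsupp.single_eq_same]
  · rw [if_neg hd]
    symm
    apply Finset.sum_eq_zero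
    intro p hp
    rw [Finset.HasAntidiagonal.mem_antidiagonal] at hp
    have hj0 : p.1 j + p.2 j = d j := by
      have := congrArg (fun e : Fin 2 →₀ ℕ => e j) hp
      simpa [Finsupp.add_apply] using this
    by_cases h1 : p.1 j = 0
    · by_cases h2 : p.2 j = 0
      · exact absurd (by omega : d j = 0) hd
      · rw [if_neg h2, mul_zero]
    · rw [if_neg h1, zero_mul]

lemma embFun_zero : embFun i j (0 : PowerSeries R) = 0 := by
  apply MvPowerSeries.ext
  intro d
  rw [coeff_embFun]
  simp

lemma embFun_add (f g : PowerSeries R) :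
    embFun i j (f + g) = embFun i j f + embFun i j g := by
  apply MvPowerSeries.ext
  intro d
  simp only [map_add, coeff_embFun]
  split_ifs <;> simp

/-- Embedding as a ring hom. -/
noncomputable def emb (hij : i ≠ j) (hcov : ∀ k : Fin 2, k = i ∨ k = j) :
    PowerSeries R →+* MvPowerSeries (Fin 2) R where
  toFun := embFun i j
  map_one' := embFun_one hcov
  map_mul' := embFun_mul hij hcov
  map_zero' := embFun_zero
  map_add' := embFun_add

lemma coeff_emb (hij : i ≠ j) (hcov : ∀ k : Fin 2, k = i ∨ k = j)
    (f : PowerSeries R) (d : Fin 2 →₀ ℕ) :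
    MvPowerSeries.coeff d (emb hij hcov f) =
      if d j = 0 then PowerSeries.coeff (d i) f else 0 := rfl

end emb

section mv

lemma emb_C {i j : Fin 2} (hij : i ≠ j) (hcov : ∀ k : Fin 2, k = i ∨ k = j) (r : R) :
    emb hij hcov (PowerSeries.C r) = MvPowerSeries.C r := by
  apply MvPowerSeries.ext
  intro d
  rw [coeff_emb, MvPowerSeries.coeff_C]
  simp only [PowerSeries.coeff_C]
  have h0 : d = 0 ↔ d i = 0 ∧ d j = 0 := by
    have := fin2_eq_iff hcov d 0
    simpa using this
  split_ifs with h1 h2 h3 h3 <;> simp_all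

lemma emb_X {i j : Fin 2} (hij : i ≠ j) (hcov : ∀ k : Fin 2, k = i ∨ k = j) :
    emb hij hcov PowerSeries.X = MvPowerSeries.X i := by
  apply MvPowerSeries.ext
  intro d
  rw [coeff_emb, MvPowerSeries.coeff_X]
  simp only [PowerSeries.coeff_X]
  have h0 : d = Finsupp.single i 1 ↔ d i = 1 ∧ d j = 0 := by
    rw [fin2_eq_iff hcov]
    rw [Finsupp.single_eq_same, Finsupp.single_eq_of_ne hij.symm]
  split_ifs with h1 h2 h3 h3 <;> simp_all

lemma emb_Piq {i j : Fin 2} (hij : i ≠ j) (hcov : ∀ k : Fin 2, k = i ∨ k = j) (m : ℕ) :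
    emb hij hcov (Piq m) =
      ∏ t ∈ Finset.range m, (1 - qc ^ t * MvPowerSeries.X i) := by
  rw [Piq, map_prod]
  apply Finset.prod_congr rfl
  intro t _
  rw [map_sub, map_one, map_mul, emb_C, emb_X]
  congr 1
  congr 1
  rw [qc, ← map_pow]

lemma emb_ringInverse {i j : Fin 2} (hij : i ≠ j) (hcov : ∀ k : Fin 2, k = i ∨ k = j)
    {u : PowerSeries R} (hu : IsUnit u) :
    Ring.inverse (emb hij hcov u) = emb hij hcov (Ring.inverse u) := by
  apply ring_inverse_eq
  rw [← map_mul, Ring.mul_inverse_cancel _ hu, map_one]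

lemma fin2_le_iff (d e : Fin 2 →₀ ℕ) : d ≤ e ↔ d 0 ≤ e 0 ∧ d 1 ≤ e 1 := by
  rw [Finsupp.le_def]
  constructor
  · intro h; exact ⟨h 0, h 1⟩
  · rintro ⟨h1, h2⟩ k; fin_cases k <;> assumption

lemma coeffL (d : Fin 2 →₀ ℕ) (m : ℕ) :
    MvPowerSeries.coeff d (Yv ^ m * ∏ t ∈ Finset.range m, (1 - qc ^ t * Xv)) =
      if d 1 = m then Pc (d 0) (d 1) else 0 := by
  have h01 : (0 : Fin 2) ≠ 1 := by decide
  have hcov : ∀ k : Fin 2, k = 0 ∨ k = 1 := by decide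
  simp only [Xv, Yv]
  rw [← emb_Piq h01 hcov m, MvPowerSeries.X_pow_eq, MvPowerSeries.coeff_monomial_mul,
    coeff_emb]
  simp only [Finsupp.tsub_apply, Finsupp.single_eq_same,
    Finsupp.single_eq_of_ne (by decide : (0 : Fin 2) ≠ 1), Finsupp.single_le_iff,
    coeff_Piq_x, one_mul, Nat.sub_zero]
  by_cases h : d 1 = m
  · rw [if_pos h, if_pos (by omega), if_pos (by omega), h]
  · split_ifs with h1 h2 <;> first | rfl | omega

lemma coeffR (d : Fin 2 →₀ ℕ) (ℓ : ℕ) :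
    MvPowerSeries.coeff d ((-(Xv * Yv)) ^ ℓ * qc ^ (ℓ * (ℓ - 1) / 2)
        * Ring.inverse (∏ t ∈ Finset.range (ℓ + 1), (1 - qc ^ t * Yv))) =
      if d 0 = ℓ then
        (if d 0 ≤ d 1 then
          (-1)^(d 0) * Polynomial.X^(d 0 * (d 0 - 1) / 2) * gc (d 0) (d 1 - d 0)
         else 0)
      else 0 := by
  have h10 : (1 : Fin 2) ≠ 0 := by decide
  have hcov : ∀ k : Fin 2, k = 1 ∨ k = 0 := by decide
  have hB : Ring.inverse (∏ t ∈ Finset.range (ℓ + 1), (1 - qc ^ t * Yv))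
      = emb h10 hcov (Ring.inverse (Piq (ℓ+1))) := by
    rw [← emb_ringInverse h10 hcov (isUnit_Piq (ℓ+1)), emb_Piq h10 hcov]
    rfl
  have hrw : (-(Xv * Yv)) ^ ℓ * qc ^ (ℓ * (ℓ - 1) / 2) =
      MvPowerSeries.C ((-1)^ℓ * Polynomial.X^(ℓ * (ℓ - 1) / 2))
      * MvPowerSeries.monomial (Finsupp.single 0 ℓ + Finsupp.single 1 ℓ) 1 := by
    simp only [Xv, Yv, qc]
    rw [neg_pow, mul_pow, MvPowerSeries.X_pow_eq, MvPowerSeries.X_pow_eq,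
      MvPowerSeries.monomial_mul_monomial, one_mul]
    simp only [map_mul, map_pow, map_neg, map_one]
    exact mul_right_comm _ _ _
  have gc_def : ∀ j : ℕ, PowerSeries.coeff j (Ring.inverse (Piq (ℓ+1))) = gc ℓ j :=
    fun _ => rfl
  rw [hB, hrw, mul_assoc, MvPowerSeries.coeff_C_mul, MvPowerSeries.coeff_monomial_mul]
  simp only [coeff_emb, one_mul, Finsupp.tsub_apply, Finsupp.add_apply,
    Finsupp.single_eq_same, Finsupp.single_eq_of_ne (by decide : (0 : Fin 2) ≠ 1),
    Finsupp.single_eq_of_ne (by decide : (1 : Fin 2) ≠ 0), fin2_le_iff,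
    Finsupp.coe_add, Pi.add_apply, add_zero, zero_add, gc_def]
  by_cases h0 : d 0 = ℓ
  · subst h0
    split_ifs <;> (try (exfalso; omega)) <;> ring
  · rw [if_neg h0]
    split_ifs <;> (try (exfalso; omega)) <;> ring

end mv


/-- `∑_{m=0}^∞ y^m (x;q)_m = ∑_{ℓ=0}^∞ (-xy)^ℓ q^{ℓ(ℓ-1)/2} (y;q)_{ℓ+1}^{-1}` in
`ℤ[q][[x,y]]`, where `(t;q)_m = (1-t)(1-qt)⋯(1-q^{m-1}t)` and each factor `(y;q)_{ℓ+1}`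
(having constant term `1`) is invertible, its inverse being given by `Ring.inverse`. -/
theorem twoVariable_qPochhammer_expansion :
    seriesSum (fun m => Yv ^ m * ∏ i ∈ Finset.range m, (1 - qc ^ i * Xv)) =
      seriesSum (fun ℓ =>
        (-(Xv * Yv)) ^ ℓ * qc ^ (ℓ * (ℓ - 1) / 2)
          * Ring.inverse (∏ i ∈ Finset.range (ℓ + 1), (1 - qc ^ i * Yv))) := by
  funext d
  simp only [seriesSum]
  rw [map_sum, map_sum]
  have hL : (∑ m ∈ Finset.range (d 0 + d 1 + 1),
      MvPowerSeries.coeff d (Yv ^ m * ∏ t ∈ Finset.range m, (1 - qc ^ t * Xv)))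
      = Pc (d 0) (d 1) := by
    rw [Finset.sum_congr rfl (fun m _ => coeffL d m), Finset.sum_ite_eq]
    rw [if_pos (Finset.mem_range.mpr (by omega))]
  have hR : (∑ ℓ ∈ Finset.range (d 0 + d 1 + 1),
      MvPowerSeries.coeff d ((-(Xv * Yv)) ^ ℓ * qc ^ (ℓ * (ℓ - 1) / 2)
        * Ring.inverse (∏ t ∈ Finset.range (ℓ + 1), (1 - qc ^ t * Yv))))
      = if d 0 ≤ d 1 then
          (-1)^(d 0) * Polynomial.X^(d 0 * (d 0 - 1) / 2) * gc (d 0) (d 1 - d 0) else 0 := by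
    rw [Finset.sum_congr rfl (fun ℓ _ => coeffR d ℓ), Finset.sum_ite_eq]
    rw [if_pos (Finset.mem_range.mpr (by omega))]
  rw [hL, hR]
  exact key (d 1) (d 0)
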